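/- Let E and V be real vector spaces, let n ≥ 2 be even with m = n/2, and let T : Eⁿ → V be a symmetric n-linear map. Let f, g ∈ E and suppose that for every real number λ ≥ 0 both T((f+λg)ⁿ) = T((f−λg)ⁿ) and T((f+λg)ⁿ) + T((f−λg)ⁿ) = 2 · ∑_{k=0}^{m} C(m,k) · λ^{2k} · T(f^{n-2k} g^{2k}) hold (where T((f±λg)ⁿ) denotes T evaluated with all n arguments equal to f±λg). Then T(f^{n-k} g^{k}) = 0 for every k with 1 ≤ k ≤ n−1. -/

import Mathlib

open Finset

private lemma coeffs_zero {V : Type*} [AddCommGroup V] [Module ℝ V]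
    (N : ℕ) (v : ℕ → V)
    (h : ∀ lam : ℝ, 0 ≤ lam → ∑ k ∈ range N, lam ^ k • v k = 0) :
    ∀ k, k < N → v k = 0 := by
  intro k hk
  rw [← Module.forall_dual_apply_eq_zero_iff ℝ]
  intro φ
  set p : Polynomial ℝ := ∑ j ∈ range N, Polynomial.C (φ (v j)) * Polynomial.X ^ j with hp
  have hroot : ∀ lam : ℝ, 0 ≤ lam → p.IsRoot lam := by
    intro lam hlam
    have h2 := congrArg φ (h lam hlam)
    simp only [map_sum, map_smul, map_zero] at h2
    simp only [Polynomial.IsRoot, hp, Polynomial.eval_finset_sum, Polynomial.eval_mul,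
      Polynomial.eval_C, Polynomial.eval_pow, Polynomial.eval_X]
    rw [← h2]
    congr 1 with j
    simp [mul_comm]
  have hp0 : p = 0 := by
    apply p.eq_zero_of_infinite_isRoot
    apply Set.Infinite.mono (fun x hx => hroot x hx) (Set.Ici_infinite 0)
  have hc : p.coeff k = φ (v k) := by
    simp [hp, Polynomial.finset_sum_coeff, Polynomial.coeff_C_mul, Polynomial.coeff_X_pow,
      Finset.sum_ite_eq' (range N) k, hk]
  rw [← hc, hp0, Polynomial.coeff_zero]

private lemma card_filter_val_lt (n M : ℕ) (h : M ≤ n) :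
    (Finset.univ.filter (fun i : Fin n => (i : ℕ) < M)).card = M := by
  have he : (Finset.univ.filter (fun i : Fin n => (i : ℕ) < M)) =
      (Finset.range M).attachFin (fun m hm => lt_of_lt_of_le (Finset.mem_range.mp hm) h) := by
    ext i
    simp [Finset.mem_attachFin]
  rw [he, Finset.card_attachFin, Finset.card_range]

private lemma sym_piecewise {E V : Type*} [AddCommGroup E] [Module ℝ E] [AddCommGroup V]
    [Module ℝ V] {n : ℕ} (T : MultilinearMap ℝ (fun _ : Fin n => E) V)
    (hsym : ∀ (σ : Equiv.Perm (Fin n)) (x : Fin n → E), T (x ∘ σ) = T x)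
    (f g : E) (s t : Finset (Fin n)) (h : s.card = t.card) :
    T (s.piecewise (fun _ => f) (fun _ => g)) = T (t.piecewise (fun _ => f) (fun _ => g)) := by
  classical
  have hcard : Fintype.card {x // x ∈ t} = Fintype.card {x // x ∈ s} := by
    simp [Fintype.card_coe, h]
  have hcompl : Fintype.card {x // ¬ x ∈ t} = Fintype.card {x // ¬ x ∈ s} := by
    rw [Fintype.card_subtype_compl, Fintype.card_subtype_compl, hcard]
  let e1 : {x // x ∈ t} ≃ {x // x ∈ s} := Fintype.equivOfCardEq hcard
  let e2 : {x // ¬ x ∈ t} ≃ {x // ¬ x ∈ s} := Fintype.equivOfCardEq hcompl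
  let σ : Equiv.Perm (Fin n) :=
    (Equiv.sumCompl (· ∈ t)).symm.trans ((e1.sumCongr e2).trans (Equiv.sumCompl (· ∈ s)))
  have hσ : ∀ i, σ i ∈ s ↔ i ∈ t := by
    intro i
    by_cases hi : i ∈ t
    · simp only [σ, Equiv.trans_apply, Equiv.sumCompl_symm_apply_of_pos hi,
        Equiv.sumCongr_apply, Sum.map_inl, Equiv.sumCompl_apply_inl]
      exact iff_of_true (e1 ⟨i, hi⟩).2 hi
    · simp only [σ, Equiv.trans_apply, Equiv.sumCompl_symm_apply_of_neg hi,
        Equiv.sumCongr_apply, Sum.map_inr, Equiv.sumCompl_apply_inr]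
      exact iff_of_false (e2 ⟨i, hi⟩).2 hi
  have heq : t.piecewise (fun _ => f) (fun _ => g) =
      (s.piecewise (fun _ => f) (fun _ => g)) ∘ σ := by
    funext i
    by_cases hi : i ∈ t
    · rw [Finset.piecewise_eq_of_mem _ _ _ hi, Function.comp_apply,
        Finset.piecewise_eq_of_mem _ _ _ ((hσ i).mpr hi)]
    · rw [Finset.piecewise_eq_of_notMem _ _ _ hi, Function.comp_apply,
        Finset.piecewise_eq_of_notMem _ _ _ (fun hh => hi ((hσ i).mp hh))]
  rw [heq, hsym σ]

private lemma choose_lt_choose (m j : ℕ) (h1 : 1 ≤ j) (h2 : j + 1 ≤ m) :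
    m.choose j < (2 * m).choose (2 * j) := by
  have hv : (2 * m).choose (2 * j) =
      ∑ ij ∈ Finset.HasAntidiagonal.antidiagonal (2 * j), m.choose ij.1 * m.choose ij.2 := by
    rw [two_mul m, Nat.add_choose_eq]
  have hpair : ((j, j) : ℕ × ℕ) ≠ (j - 1, j + 1) := by
    intro hcon
    have := congrArg Prod.snd hcon
    omega
  have hsub : ({(j, j), (j - 1, j + 1)} : Finset (ℕ × ℕ)) ⊆ Finset.HasAntidiagonal.antidiagonal (2 * j) := by
    intro x hx
    simp only [Finset.mem_insert, Finset.mem_singleton] at hx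
    rcases hx with rfl | rfl <;> simp [Finset.mem_antidiagonal] <;> omega
  have hsum := Finset.sum_le_sum_of_subset
    (f := fun ij : ℕ × ℕ => m.choose ij.1 * m.choose ij.2) hsub
  rw [Finset.sum_insert (by simp [hpair]), Finset.sum_singleton] at hsum
  simp only at hsum
  rw [hv]
  have h3 : m.choose j ≤ m.choose j * m.choose j :=
    Nat.le_mul_of_pos_left _ (Nat.choose_pos (by omega))
  have h4 : 0 < m.choose (j - 1) * m.choose (j + 1) :=
    Nat.mul_pos (Nat.choose_pos (by omega)) (Nat.choose_pos h2)
  omega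

private lemma expansion {E V : Type*} [AddCommGroup E] [Module ℝ E] [AddCommGroup V]
    [Module ℝ V] {n : ℕ} (T : MultilinearMap ℝ (fun _ : Fin n => E) V)
    (hsym : ∀ (σ : Equiv.Perm (Fin n)) (x : Fin n → E), T (x ∘ σ) = T x)
    (f g : E) (c : ℝ) :
    T (fun _ => f + c • g) =
      ∑ k ∈ range (n + 1), ((n.choose k : ℝ) * c ^ k) •
        T (fun i => if (i : ℕ) < n - k then f else g) := by
  classical
  have h0 : (fun _ : Fin n => f + c • g) = (fun _ : Fin n => f) + (fun _ : Fin n => c • g) := rfl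
  rw [h0, T.map_add_univ]
  have hterm : ∀ s : Finset (Fin n),
      T (s.piecewise (fun _ => f) (fun _ => c • g)) =
        c ^ (n - s.card) • T (fun i => if (i : ℕ) < s.card then f else g) := by
    intro s
    have h1 : s.piecewise (fun _ => f) (fun _ => c • g) =
        fun i => (if i ∈ s then (1 : ℝ) else c) • (s.piecewise (fun _ => f) (fun _ => g)) i := by
      funext i
      by_cases hi : i ∈ s <;>
        simp [Finset.piecewise_eq_of_mem _ _ _, Finset.piecewise, hi]
    rw [h1, T.map_smul_univ]
    have hprod : (∏ i : Fin n, (if i ∈ s then (1 : ℝ) else c)) = c ^ (n - s.card) := by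
      rw [Finset.prod_ite, Finset.prod_const_one, one_mul, Finset.prod_const]
      congr 1
      have hc : Finset.filter (fun x => x ∉ s) Finset.univ = sᶜ := by
        ext x; simp
      rw [hc, Finset.card_compl, Fintype.card_fin]
    rw [hprod]
    congr 1
    have hcard : s.card ≤ n := by
      simpa using Finset.card_le_univ s
    have := sym_piecewise T hsym f g s
      (Finset.univ.filter (fun i : Fin n => (i : ℕ) < s.card))
      (by rw [card_filter_val_lt n s.card hcard])
    rw [this]
    congr 1
    funext i
    by_cases hi : (i : ℕ) < s.card
    · rw [Finset.piecewise_eq_of_mem _ _ _ (by simp [hi]), if_pos hi]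
    · rw [Finset.piecewise_eq_of_notMem _ _ _ (by simp [hi]), if_neg hi]
  rw [← Finset.powerset_univ, Finset.sum_powerset,
    ← Finset.sum_range_reflect (fun k => ((n.choose k : ℝ) * c ^ k) •
      T (fun i => if (i : ℕ) < n - k then f else g)) (n + 1)]
  apply Finset.sum_congr (by simp)
  intro j hj
  have hj' : j ≤ n := by
    simp only [Finset.mem_range, Finset.card_univ, Fintype.card_fin] at hj
    omega
  have hstep : ∀ t ∈ Finset.powersetCard j (Finset.univ : Finset (Fin n)),
      T (t.piecewise (fun _ => f) (fun _ => c • g)) =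
        c ^ (n - j) • T (fun i => if (i : ℕ) < j then f else g) := by
    intro t ht
    have htc : t.card = j := (Finset.mem_powersetCard.mp ht).2
    rw [hterm t, htc]
  rw [Finset.sum_congr rfl hstep, Finset.sum_const, Finset.card_powersetCard,
    Finset.card_univ, Fintype.card_fin]
  have h1 : n + 1 - 1 - j = n - j := by omega
  have h2 : n - (n - j) = j := by omega
  rw [h1, h2, Nat.choose_symm hj', ← Nat.cast_smul_eq_nsmul ℝ, smul_smul]
theorem stmt_5 (E V : Type*) [AddCommGroup E] [Module ℝ E]
    [AddCommGroup V] [Module ℝ V] (n m : ℕ) (hn : 2 ≤ n) (hnm : n = 2 * m)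
    (T : MultilinearMap ℝ (fun _ : Fin n => E) V)
    (hsym : ∀ (σ : Equiv.Perm (Fin n)) (x : Fin n → E), T (x ∘ σ) = T x)
    (f g : E)
    (h1 : ∀ lam : ℝ, 0 ≤ lam →
      T (fun _ => f + lam • g) = T (fun _ => f - lam • g))
    (h2 : ∀ lam : ℝ, 0 ≤ lam →
      T (fun _ => f + lam • g) + T (fun _ => f - lam • g) =
        (2 : ℝ) • ∑ k ∈ Finset.range (m + 1),
          ((m.choose k : ℝ) * lam ^ (2 * k)) •
            T (fun i => if (i : ℕ) < n - 2 * k then f else g)) :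
    ∀ k, 1 ≤ k → k ≤ n - 1 →
      T (fun i => if (i : ℕ) < n - k then f else g) = 0 := by
  classical
  have hm : 1 ≤ m := by omega
  set a : ℕ → V := fun j => T (fun i => if (i : ℕ) < n - j then f else g) with ha
  have haeq : ∀ j, T (fun i => if (i : ℕ) < n - j then f else g) = a j := fun _ => rfl
  have hE : ∀ c : ℝ, T (fun _ => f + c • g) =
      ∑ j ∈ range (n + 1), ((n.choose j : ℝ) * c ^ j) • a j := fun c =>
    expansion T hsym f g c
  have hsubst : ∀ lam : ℝ, (fun _ : Fin n => f - lam • g) = fun _ : Fin n => f + (-lam) • g := by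
    intro lam; funext i; rw [neg_smul, ← sub_eq_add_neg]
  -- odd coefficients vanish
  have hodd : ∀ j, j ≤ n → j % 2 = 1 → a j = 0 := by
    intro j hjn hj2
    have hv := coeffs_zero (n + 1)
      (fun j => (((n.choose j : ℝ) - (n.choose j : ℝ) * (-1) ^ j) • a j)) ?_ j (by omega)
    · have hsc : ((n.choose j : ℝ) - (n.choose j : ℝ) * (-1) ^ j) = 2 * (n.choose j : ℝ) := by
        rw [Odd.neg_one_pow (Nat.odd_iff.mpr hj2)]; ring
      simp only [hsc] at hv
      have hne : (2 * (n.choose j : ℝ)) ≠ 0 := by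
        have h0 := Nat.choose_pos hjn
        positivity
      rw [← inv_smul_smul₀ hne (a j), hv, smul_zero]
    · intro lam hlam
      have h1' := h1 lam hlam
      rw [hsubst lam, hE lam, hE (-lam)] at h1'
      have hcalc : ∑ j ∈ range (n + 1),
          lam ^ j • (((n.choose j : ℝ) - (n.choose j : ℝ) * (-1) ^ j) • a j) =
          (∑ j ∈ range (n + 1), ((n.choose j : ℝ) * lam ^ j) • a j) -
          ∑ j ∈ range (n + 1), ((n.choose j : ℝ) * (-lam) ^ j) • a j := by
        rw [← Finset.sum_sub_distrib]
        apply Finset.sum_congr rfl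
        intro j _
        rw [smul_smul, ← sub_smul]
        congr 1
        rw [neg_pow]
        ring
      rw [hcalc, h1', sub_self]
  -- even coefficients agree with the m-choose values
  set w : ℕ → V := fun j => if j % 2 = 0 then (m.choose (j / 2) : ℝ) • a j else 0 with hw
  have hre : ∀ lam : ℝ,
      ∑ k ∈ range (m + 1), ((m.choose k : ℝ) * lam ^ (2 * k)) • a (2 * k) =
      ∑ j ∈ range (n + 1), lam ^ j • w j := by
    intro lam
    have hright : ∑ j ∈ range (n + 1), lam ^ j • w j =
        ∑ j ∈ (range (n + 1)).filter (fun j => j % 2 = 0),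
          lam ^ j • ((m.choose (j / 2) : ℝ) • a j) := by
      rw [Finset.sum_filter]
      apply Finset.sum_congr rfl
      intro j _
      by_cases hj : j % 2 = 0 <;> simp [hw, hj]
    rw [hright]
    apply Finset.sum_nbij' (i := fun k => 2 * k) (j := fun j => j / 2)
    · intro k hk
      simp only [Finset.mem_filter, Finset.mem_range] at hk ⊢
      omega
    · intro j hj
      simp only [Finset.mem_filter, Finset.mem_range] at hj ⊢
      omega
    · intro k _; omega
    · intro j hj
      simp only [Finset.mem_filter, Finset.mem_range] at hj
      omega
    · intro k _
      have : 2 * k / 2 = k := by omega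
      rw [this, smul_smul, mul_comm]
  have hevenfam : ∀ lam : ℝ, 0 ≤ lam →
      ∑ j ∈ range (n + 1), lam ^ j • ((n.choose j : ℝ) • a j - w j) = 0 := by
    intro lam hlam
    have h2' := h2 lam hlam
    rw [← h1 lam hlam, ← two_smul ℝ] at h2'
    have h2'' := smul_right_injective V (two_ne_zero (α := ℝ)) h2'
    rw [hE lam] at h2''
    simp only [haeq] at h2''
    have hcalc : ∑ j ∈ range (n + 1), lam ^ j • ((n.choose j : ℝ) • a j - w j) =
        (∑ j ∈ range (n + 1), ((n.choose j : ℝ) * lam ^ j) • a j) -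
        ∑ j ∈ range (n + 1), lam ^ j • w j := by
      rw [← Finset.sum_sub_distrib]
      apply Finset.sum_congr rfl
      intro j _
      rw [smul_sub, smul_smul, mul_comm]
    rw [hcalc, h2'', ← hre lam, sub_self]
  intro k hk1 hk2
  rw [haeq]
  rcases Nat.even_or_odd k with hke | hko
  · -- even case
    have hk0 : k % 2 = 0 := Nat.even_iff.mp hke
    have hv := coeffs_zero (n + 1) (fun j => (n.choose j : ℝ) • a j - w j) hevenfam k (by omega)
    simp only [hw, hk0, if_true] at hv
    have hvv : ((n.choose k : ℝ) - (m.choose (k / 2) : ℝ)) • a k = 0 := by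
      rw [sub_smul]
      simpa using hv
    have hlt : m.choose (k / 2) < n.choose k := by
      have h2k : 2 * (k / 2) = k := by omega
      have := choose_lt_choose m (k / 2) (by omega) (by omega)
      rw [h2k, ← hnm] at this
      exact this
    have hne : ((n.choose k : ℝ) - (m.choose (k / 2) : ℝ)) ≠ 0 := by
      have : (m.choose (k / 2) : ℝ) < (n.choose k : ℝ) := by exact_mod_cast hlt
      intro hcon
      nlinarith
    rw [← inv_smul_smul₀ hne (a k), hvv, smul_zero]
  · exact hodd k (by omega) (Nat.odd_iff.mp hko)
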